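/- Let α ∈ (2/3, 1) and for integers i ≥ 1 define p_i = (2/4^i)·((2i−2)!/((i−1)!·(i+1)!))·(2/α − 2)^i·((3α−2)i + 1). Then the series Σ_{i≥1} i·p_i converges and α − Σ_{i≥1} i·p_i = √α·√(3α−2); in particular α − Σ_{i≥1} i·p_i > 0. -/

import Mathlib

open Finset

private lemma cat_le_four_pow (n : ℕ) : (catalan n : ℝ) ≤ 4 ^ n := by
  have h1 : catalan n ≤ n.centralBinom := by
    calc catalan n ≤ (n + 1) * catalan n := Nat.le_mul_of_pos_left _ (by omega)
      _ = n.centralBinom := succ_mul_catalan_eq_centralBinom n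
  have h2 : n.centralBinom ≤ 4 ^ n := by
    calc n.centralBinom ≤ (2 * n + 1).choose n := Nat.choose_le_choose n (by omega)
      _ ≤ 4 ^ n := Nat.choose_middle_le_pow n
  exact_mod_cast le_trans h1 h2

private lemma cat_summable {t : ℝ} (h0 : 0 ≤ t) (h4 : t < 1 / 4) :
    Summable (fun n : ℕ => (catalan n : ℝ) * t ^ n) := by
  have hle : ∀ n : ℕ, (catalan n : ℝ) * t ^ n ≤ (4 * t) ^ n := by
    intro n
    rw [mul_pow]
    exact mul_le_mul_of_nonneg_right (cat_le_four_pow n) (by positivity)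
  exact Summable.of_nonneg_of_le (fun n => by positivity) hle
    (summable_geometric_of_lt_one (by positivity) (by linarith))

private noncomputable def catG (t : ℝ) : ℝ := ∑' n : ℕ, (catalan n : ℝ) * t ^ n

private lemma catG_quad {t : ℝ} (h0 : 0 ≤ t) (h4 : t < 1 / 4) :
    t * catG t ^ 2 = catG t - 1 := by
  have hs := cat_summable h0 h4
  have hnorm : Summable fun n : ℕ => ‖(catalan n : ℝ) * t ^ n‖ := by
    simp only [Real.norm_eq_abs]
    exact hs.abs
  have hC := tsum_mul_tsum_eq_tsum_sum_antidiagonal_of_summable_norm hnorm hnorm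
  have hinner : ∀ n : ℕ,
      (∑ kl ∈ antidiagonal n,
        ((catalan kl.1 : ℝ) * t ^ kl.1) * ((catalan kl.2 : ℝ) * t ^ kl.2))
        = (catalan (n + 1) : ℝ) * t ^ n := by
    intro n
    have hcong : ∀ kl ∈ antidiagonal n,
        ((catalan kl.1 : ℝ) * t ^ kl.1) * ((catalan kl.2 : ℝ) * t ^ kl.2)
          = ((catalan kl.1 * catalan kl.2 : ℕ) : ℝ) * t ^ n := by
      intro kl hkl
      have hkl' : kl.1 + kl.2 = n := Finset.HasAntidiagonal.mem_antidiagonal.1 hkl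
      push_cast
      rw [← hkl', pow_add]; ring
    rw [Finset.sum_congr rfl hcong, ← Finset.sum_mul, ← Nat.cast_sum, ← catalan_succ' n]
  have hG2 : catG t * catG t = ∑' n : ℕ, (catalan (n + 1) : ℝ) * t ^ n := by
    rw [catG, hC, tsum_congr hinner]
  have h3 : t * (catG t * catG t) = ∑' n : ℕ, (catalan (n + 1) : ℝ) * t ^ (n + 1) := by
    rw [hG2, ← tsum_mul_left]
    exact tsum_congr fun n => by ring
  have h4' : (∑' n : ℕ, (catalan (n + 1) : ℝ) * t ^ (n + 1)) = catG t - 1 := by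
    have h5 := Summable.tsum_eq_zero_add hs
    simp only [catalan_zero, Nat.cast_one, pow_zero, one_mul, mul_one] at h5
    rw [catG, h5]; ring
  rw [pow_two, h3, h4']

private lemma catG_ge_one {t : ℝ} (h0 : 0 ≤ t) (h4 : t < 1 / 4) : 1 ≤ catG t := by
  have hs := cat_summable h0 h4
  have := Summable.le_tsum hs 0 (fun j _ => by positivity)
  simpa [catG] using this

private lemma catG_mono {t₁ t₂ : ℝ} (h0 : 0 ≤ t₁) (h12 : t₁ ≤ t₂) (h4 : t₂ < 1 / 4) :
    catG t₁ ≤ catG t₂ := by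
  apply Summable.tsum_le_tsum _ (cat_summable h0 (lt_of_le_of_lt h12 h4)) (cat_summable (h0.trans h12) h4)
  intro n
  exact mul_le_mul_of_nonneg_left (pow_le_pow_left₀ h0 h12 n) (by positivity)

private lemma catG_sign {t : ℝ} (h0 : 0 < t) (h4 : t < 1 / 4) : 2 * t * catG t ≤ 1 := by
  by_contra hcon
  push_neg at hcon
  set s₁ : ℝ := t / 2 + 1 / 8 with hs₁
  set s₂ : ℝ := t / 4 + 3 / 16 with hs₂
  have ht1 : t < s₁ := by rw [hs₁]; linarith
  have h12 : s₁ < s₂ := by rw [hs₁, hs₂]; linarith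
  have h24 : s₂ < 1 / 4 := by rw [hs₂]; linarith
  have h10 : (0:ℝ) < s₁ := by rw [hs₁]; linarith
  have h20 : (0:ℝ) < s₂ := by rw [hs₂]; linarith
  have q1 := catG_quad h10.le (h12.trans h24)
  have q2 := catG_quad h20.le h24
  have g1 : 1 ≤ catG s₁ := catG_ge_one h10.le (h12.trans h24)
  have g2 : 1 ≤ catG s₂ := catG_ge_one h20.le h24
  have m1 : catG t ≤ catG s₁ := catG_mono h0.le ht1.le (h12.trans h24)
  have m2 : catG s₁ ≤ catG s₂ := catG_mono h10.le h12.le h24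
  -- 1 < 2 t G t ≤ 2 t G s₁ < 2 s₁ G s₁ < 2 s₂ G s₂
  have hh1 : 1 < 2 * s₁ * catG s₁ := by nlinarith
  have hh2 : 2 * s₁ * catG s₁ < 2 * s₂ * catG s₂ := by nlinarith
  nlinarith [sq_nonneg (2 * s₁ * catG s₁ - 1), sq_nonneg (2 * s₂ * catG s₂ - 1)]

private lemma catalanGF {x : ℝ} (h0 : 0 < x) (h4 : x < 1 / 4) :
    HasSum (fun n : ℕ => (catalan n : ℝ) * x ^ n)
      ((1 - Real.sqrt (1 - 4 * x)) / (2 * x)) := by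
  have hs := cat_summable h0.le h4
  have hsq : (2 * x * catG x - 1) ^ 2 = 1 - 4 * x := by
    have q := catG_quad h0.le h4
    linear_combination (4 * x) * q
  have hle : 2 * x * catG x - 1 ≤ 0 := by linarith [catG_sign h0 h4]
  have hsqrt : Real.sqrt (1 - 4 * x) = -(2 * x * catG x - 1) := by
    rw [← hsq, Real.sqrt_sq_eq_abs, abs_of_nonpos hle]
  have hG : catG x = (1 - Real.sqrt (1 - 4 * x)) / (2 * x) := by
    rw [hsqrt]
    field_simp
    ring
  have h6 := hs.hasSum
  rw [show (∑' n : ℕ, (catalan n : ℝ) * x ^ n) = catG x from rfl, hG] at h6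
  exact h6
set_option maxHeartbeats 1000000 in
theorem supercritical_expected_boundary_change
    (α : ℝ) (hα0 : 2 / 3 < α) (hα1 : α < 1)
    (p : ℕ → ℝ)
    (hp : ∀ i : ℕ, 1 ≤ i →
      p i = 2 / 4 ^ i *
        ((Nat.factorial (2 * i - 2) : ℝ) /
          ((Nat.factorial (i - 1) : ℝ) * (Nat.factorial (i + 1) : ℝ))) *
        (2 / α - 2) ^ i * ((3 * α - 2) * (i : ℝ) + 1)) :
    HasSum (fun i : ℕ => ((i : ℝ) + 1) * p (i + 1))
        (α - Real.sqrt α * Real.sqrt (3 * α - 2)) ∧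
      0 < α - ∑' i : ℕ, ((i : ℝ) + 1) * p (i + 1) := by
  have hαpos : 0 < α := by linarith
  have hβ : 0 < 3 * α - 2 := by linarith
  set x : ℝ := (1 - α) / (2 * α) with hxdef
  have hx0 : 0 < x := by
    rw [hxdef]
    exact div_pos (by linarith) (by linarith)
  have hx4 : x < 1 / 4 := by
    rw [hxdef, div_lt_div_iff₀ (by linarith) (by norm_num)]
    linarith
  -- catalan ratio identity
  have hrationat : ∀ n : ℕ, (n + 2) * catalan (n + 1) = 2 * (2 * n + 1) * catalan n := by
    intro n
    have h1 := succ_mul_catalan_eq_centralBinom (n + 1)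
    have h2 := Nat.succ_mul_centralBinom_succ n
    have h3 := succ_mul_catalan_eq_centralBinom n
    have h4 : (n + 1) * Nat.centralBinom (n + 1) = (n + 1) * (2 * (2 * n + 1) * catalan n) := by
      rw [h2, ← h3]; ring
    have h5 : Nat.centralBinom (n + 1) = 2 * (2 * n + 1) * catalan n :=
      Nat.eq_of_mul_eq_mul_left (by omega) h4
    calc (n + 2) * catalan (n + 1) = Nat.centralBinom (n + 1) := h1
      _ = 2 * (2 * n + 1) * catalan n := h5
  have hratio : ∀ n : ℕ, ((n : ℝ) + 2) * (catalan (n + 1) : ℝ)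
      = 2 * (2 * (n : ℝ) + 1) * (catalan n : ℝ) := by
    intro n
    exact_mod_cast congrArg (fun m : ℕ => (m : ℝ)) (hrationat n)
  -- factorial identity
  have hfact : ∀ n : ℕ, ((2 * n).factorial : ℝ)
      = ((n : ℝ) + 1) * (catalan n : ℝ) * (n.factorial : ℝ) * (n.factorial : ℝ) := by
    intro n
    have h1 := Nat.choose_mul_factorial_mul_factorial
      (show n ≤ 2 * n by omega)
    have h2 : 2 * n - n = n := by omega
    rw [h2] at h1
    have h3 := succ_mul_catalan_eq_centralBinom n
    have h4 : (2 * n).factorial = (n + 1) * catalan n * n.factorial * n.factorial := by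
      rw [← h1, h3]; rfl
    rw [h4]; push_cast; ring
  -- key pointwise identity
  have key : ∀ n : ℕ, ((n : ℝ) + 1) * p (n + 1)
      = 2 * α * x * ((catalan n : ℝ) * x ^ n)
        + 2 * α * x * ((n : ℝ) * (catalan n : ℝ) * x ^ n
          - ((n : ℝ) + 1) * (catalan (n + 1) : ℝ) * x ^ (n + 1)) := by
    intro n
    rw [hp (n + 1) (by omega)]
    have e1 : 2 * (n + 1) - 2 = 2 * n := by omega
    have e2 : n + 1 - 1 = n := by omega
    rw [e1, e2, hfact n]
    have e3 : (catalan (n + 1) : ℝ) = 2 * (2 * (n : ℝ) + 1) * (catalan n : ℝ) / ((n : ℝ) + 2) := by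
      rw [eq_div_iff (by positivity)]
      linarith [hratio n]
    rw [e3]
    have e4 : ((n + 1 + 1).factorial : ℝ) = ((n : ℝ) + 2) * (((n : ℝ) + 1) * (n.factorial : ℝ)) := by
      rw [Nat.factorial_succ, Nat.factorial_succ]; push_cast; ring
    rw [e4]
    have hα_eq : α = 1 / (2 * x + 1) := by
      rw [hxdef]
      rw [eq_div_iff (by rw [hxdef] at hx0; nlinarith [hx0])]
      field_simp
      ring
    have hx1 : (2 * x + 1) ≠ 0 := by positivity
    have hxne : x ≠ 0 := ne_of_gt hx0
    have e5 : 2 / α - 2 = 4 * x := by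
      rw [hxdef]
      field_simp
      ring
    rw [e5, mul_pow, hα_eq]
    have hfne : (n.factorial : ℝ) ≠ 0 := by positivity
    have hn2 : ((n : ℝ) + 2) ≠ 0 := by positivity
    have hn1 : ((n : ℝ) + 1) ≠ 0 := by positivity
    have h4p : ((4 : ℝ)) ^ (n + 1) ≠ 0 := by positivity
    push_cast
    field_simp
    ring
  -- summability of v
  have hv : Summable (fun n : ℕ => (n : ℝ) * (catalan n : ℝ) * x ^ n) := by
    have hb : Summable (fun n : ℕ => (n : ℝ) ^ 1 * (4 * x) ^ n) :=
      summable_pow_mul_geometric_of_norm_lt_one 1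
        (by rw [Real.norm_eq_abs, abs_of_pos (by positivity)]; linarith)
    apply Summable.of_nonneg_of_le (fun n => by positivity) _ hb
    intro n
    have := cat_le_four_pow n
    calc (n : ℝ) * (catalan n : ℝ) * x ^ n ≤ (n : ℝ) * 4 ^ n * x ^ n := by
          apply mul_le_mul_of_nonneg_right _ (by positivity)
          exact mul_le_mul_of_nonneg_left this (by positivity)
      _ = (n : ℝ) ^ 1 * (4 * x) ^ n := by rw [mul_pow]; ring
  have hV := hv.hasSum
  set V : ℝ := ∑' n : ℕ, (n : ℝ) * (catalan n : ℝ) * x ^ n with hVdef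
  have htail : HasSum (fun n : ℕ => ((n : ℝ) + 1) * (catalan (n + 1) : ℝ) * x ^ (n + 1)) V := by
    have h := (hasSum_nat_add_iff' (f := fun n : ℕ => (n : ℝ) * (catalan n : ℝ) * x ^ n) 1).2 hV
    simp only [Finset.sum_range_one, Nat.cast_zero, zero_mul, sub_zero] at h
    have e : (fun n : ℕ => ((n : ℝ) + 1) * (catalan (n + 1) : ℝ) * x ^ (n + 1))
        = fun n : ℕ => ((n + 1 : ℕ) : ℝ) * (catalan (n + 1) : ℝ) * x ^ (n + 1) := by
      funext n; push_cast; ring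
    rw [e]; exact h
  have htel : HasSum (fun n : ℕ => (n : ℝ) * (catalan n : ℝ) * x ^ n
      - ((n : ℝ) + 1) * (catalan (n + 1) : ℝ) * x ^ (n + 1)) 0 := by
    simpa using hV.sub htail
  have hGF := catalanGF hx0 hx4
  have h14 : 1 - 4 * x = (3 * α - 2) / α := by
    rw [hxdef]; field_simp; ring
  have hsum : HasSum (fun n : ℕ => ((n : ℝ) + 1) * p (n + 1))
      (α - Real.sqrt α * Real.sqrt (3 * α - 2)) := by
    have h := (hGF.mul_left (2 * α * x)).add (htel.mul_left (2 * α * x))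
    have heq : (fun n : ℕ => 2 * α * x * ((catalan n : ℝ) * x ^ n)
        + 2 * α * x * ((n : ℝ) * (catalan n : ℝ) * x ^ n
          - ((n : ℝ) + 1) * (catalan (n + 1) : ℝ) * x ^ (n + 1)))
        = fun n : ℕ => ((n : ℝ) + 1) * p (n + 1) := funext fun n => (key n).symm
    rw [heq] at h
    convert h using 1
    · rfl
    have e1 : 2 * α * x * ((1 - Real.sqrt (1 - 4 * x)) / (2 * x)) + 2 * α * x * 0
        = α * (1 - Real.sqrt (1 - 4 * x)) := by
      field_simp
      ring
    rw [e1, h14, Real.sqrt_div hβ.le]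
    have hsa : Real.sqrt α ≠ 0 := ne_of_gt (Real.sqrt_pos.2 hαpos)
    have e3 : α * (Real.sqrt (3 * α - 2) / Real.sqrt α)
        = Real.sqrt α * Real.sqrt (3 * α - 2) := by
      rw [show α * (Real.sqrt (3 * α - 2) / Real.sqrt α)
          = (α / Real.sqrt α) * Real.sqrt (3 * α - 2) by ring, Real.div_sqrt]
    rw [mul_sub, mul_one, e3]
  refine ⟨hsum, ?_⟩
  rw [hsum.tsum_eq]
  have s1 : 0 < Real.sqrt α := Real.sqrt_pos.2 hαpos
  have s2 : 0 < Real.sqrt (3 * α - 2) := Real.sqrt_pos.2 hβ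
  nlinarith
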